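/- Let n be a positive natural number, V₊ > 0, α, β > 0, and ψ_α, ψ_β ∈ ℝⁿ. Define V ∈ ℝⁿ by V_ℓ = V₊ if β ψ_αℓ² < α ψ_βℓ² and V_ℓ = 0 otherwise; define the scalars A = 4β/(α+β)² and B = 4α/(α+β)²; and define f₊, f₋ ∈ ℝⁿ by f₊ℓ = max(B ψ_βℓ² − A ψ_αℓ², 0) and f₋ℓ = max(A ψ_αℓ² − B ψ_βℓ², 0). Then this data satisfies the KKT conditions of the gap-optimization semidefinite program with q = 1 and one-dimensional subspaces: (i) A = 4β/(α+β)² ≥ 0 and B = 4α/(α+β)² ≥ 0 and f₊ℓ, f₋ℓ ≥ 0 for all ℓ; (ii) for each ℓ, B ψ_βℓ² − A ψ_αℓ² = f₊ℓ − f₋ℓ; (iii) Σ_ℓ f₊ℓ (V₊ − V_ℓ) = 0 and Σ_ℓ f₋ℓ V_ℓ = 0; and (iv) 0 ≤ V_ℓ ≤ V₊ for all ℓ. -/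

import Mathlib

/-- The one-dimensional rearrangement step (set `V = V₊` exactly where `β ψα² < α ψβ²`)
together with the natural dual variables satisfies the KKT conditions of the
gap-optimization SDP with a single quasi-momentum and rank-one subspaces. -/
theorem rearrangement_satisfies_kkt
    (n : ℕ) (hn : 0 < n) (Vp : ℝ) (hVp : 0 < Vp)
    (α β : ℝ) (hα : 0 < α) (hβ : 0 < β)
    (ψα ψβ : Fin n → ℝ)
    (V : Fin n → ℝ)
    (hV : ∀ ℓ, V ℓ = if β * ψα ℓ ^ 2 < α * ψβ ℓ ^ 2 then Vp else 0)
    (A B : ℝ) (hA : A = 4 * β / (α + β) ^ 2) (hB : B = 4 * α / (α + β) ^ 2)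
    (fp fm : Fin n → ℝ)
    (hfp : ∀ ℓ, fp ℓ = max (B * ψβ ℓ ^ 2 - A * ψα ℓ ^ 2) 0)
    (hfm : ∀ ℓ, fm ℓ = max (A * ψα ℓ ^ 2 - B * ψβ ℓ ^ 2) 0) :
    (0 ≤ A ∧ 0 ≤ B ∧ ∀ ℓ, 0 ≤ fp ℓ ∧ 0 ≤ fm ℓ) ∧
    (∀ ℓ, B * ψβ ℓ ^ 2 - A * ψα ℓ ^ 2 = fp ℓ - fm ℓ) ∧
    ((∑ ℓ, fp ℓ * (Vp - V ℓ) = 0) ∧ (∑ ℓ, fm ℓ * V ℓ = 0)) ∧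
    (∀ ℓ, 0 ≤ V ℓ ∧ V ℓ ≤ Vp) := by
  have hden : (0:ℝ) < (α + β) ^ 2 := by positivity
  have hAB : ∀ ℓ, (B * ψβ ℓ ^ 2 - A * ψα ℓ ^ 2) =
      (4 / (α + β) ^ 2) * (α * ψβ ℓ ^ 2 - β * ψα ℓ ^ 2) := by
    intro ℓ; rw [hA, hB]; field_simp
  have hcoef : (0:ℝ) < 4 / (α + β) ^ 2 := by positivity
  refine ⟨⟨by rw [hA]; positivity, by rw [hB]; positivity,
      fun ℓ => ⟨by rw [hfp]; exact le_max_right _ _, by rw [hfm]; exact le_max_right _ _⟩⟩,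
    fun ℓ => by rw [hfp, hfm]; rcases le_total (B * ψβ ℓ ^ 2 - A * ψα ℓ ^ 2) 0 with h | h <;>
      [rw [max_eq_right h, max_eq_left (by linarith)]; rw [max_eq_left h, max_eq_right (by linarith)]] <;> ring,
    ⟨?_, ?_⟩,
    fun ℓ => by rw [hV]; split <;> constructor <;> linarith⟩
  · refine Finset.sum_eq_zero fun ℓ _ => ?_
    rcases lt_or_ge (β * ψα ℓ ^ 2) (α * ψβ ℓ ^ 2) with h | h
    · rw [hV ℓ, if_pos h]; ring
    · have : fp ℓ = 0 := by
        rw [hfp, max_eq_right]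
        rw [hAB]; nlinarith
      rw [this, zero_mul]
  · refine Finset.sum_eq_zero fun ℓ _ => ?_
    rcases lt_or_ge (β * ψα ℓ ^ 2) (α * ψβ ℓ ^ 2) with h | h
    · have : fm ℓ = 0 := by
        rw [hfm, max_eq_right]
        have := hAB ℓ; nlinarith
      rw [this, zero_mul]
    · rw [hV ℓ, if_neg (not_lt.mpr h), mul_zero]
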